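/- Let t ≥ 2 and q ≥ 2 be integers, let G be a finite t-broom-free graph, and let V_1, …, V_q be pairwise disjoint nonempty independent sets in G with |V_q| = t such that Q := G[V_1 ∪ ⋯ ∪ V_q] is a complete q-partite graph with parts V_1, …, V_q. Let Z = {v ∈ N(V(Q)) : v is complete to V_q}, let W = {v ∈ N(V(Q)) : v is anticomplete to V_q}, and for each I ⊆ V_1 ∪ ⋯ ∪ V_{q-1} let W_I = {v ∈ W : v is complete to I and anticomplete to (V_1 ∪ ⋯ ∪ V_{q-1}) \ I}. Then for every z ∈ Z, every I ⊆ V_1 ∪ ⋯ ∪ V_{q-1}, and every connected component X_I of G[W_I], the vertex z is either complete to V(X_I) or anticomplete to V(X_I). -/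

import Mathlib

open SimpleGraph

/-- The `t`-broom: `K_{1,t+1}` with one edge subdivided once.
Vertex `0` is `u₀`, vertex `1` is `v₁`, vertex `2` is `v₂`,
and vertices `3, …, t+2` are `u₁, …, u_t`. -/
def tBroom (t : ℕ) : SimpleGraph (Fin (t + 3)) :=
  SimpleGraph.fromRel (fun a b =>
    (a = 0 ∧ b = 1) ∨ (a = 1 ∧ b = 2) ∨ (a = 0 ∧ 3 ≤ b.val))

/-- `G` is `H`-free: no induced subgraph of `G` is isomorphic to `H`.
(A graph embedding `H ↪g G` is exactly an isomorphism of `H` onto an induced subgraph of `G`.) -/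
def Free {V W : Type*} (G : SimpleGraph V) (H : SimpleGraph W) : Prop :=
  ¬ Nonempty (H ↪g G)

/-- The neighborhood `N(S)` of a set `S`: vertices outside `S` with a neighbor in `S`. -/
def nbhd {V : Type*} (G : SimpleGraph V) (S : Set V) : Set V :=
  {v | v ∉ S ∧ ∃ u ∈ S, G.Adj u v}

/-- `v` is complete to `S`: adjacent to every vertex of `S`. -/
def CompleteTo {V : Type*} (G : SimpleGraph V) (v : V) (S : Set V) : Prop :=
  ∀ u ∈ S, G.Adj v u

/-- `v` is anticomplete to `S`: adjacent to no vertex of `S`. -/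
def AnticompleteTo {V : Type*} (G : SimpleGraph V) (v : V) (S : Set V) : Prop :=
  ∀ u ∈ S, ¬ G.Adj v u

/-- `v` is neutral to `S`: neither complete nor anticomplete to `S`. -/
def NeutralTo {V : Type*} (G : SimpleGraph V) (v : V) (S : Set V) : Prop :=
  ¬ CompleteTo G v S ∧ ¬ AnticompleteTo G v S

/-- `S` is an independent set of size `s` in `G`. -/
def IsNIndepSet' {V : Type*} (G : SimpleGraph V) (s : ℕ) (S : Finset V) : Prop :=
  S.card = s ∧ ∀ u ∈ S, ∀ v ∈ S, u ≠ v → ¬ G.Adj u v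

/-- `R` has the Ramsey property for `(s, n)`: every finite simple graph on at least `R`
vertices contains an independent set of size `s` or a clique of size `n`. -/
def RamseyProp (R s n : ℕ) : Prop :=
  ∀ (W : Type) [Fintype W] (H : SimpleGraph W), R ≤ Fintype.card W →
    (∃ S : Finset W, IsNIndepSet' H s S) ∨ (∃ S : Finset W, H.IsNClique n S)

/-- The distance (in `ℕ∞`) from a set `S` to a vertex `v`:
the minimum over `u ∈ S` of the distance from `u` to `v`. -/
noncomputable def eDistSet {V : Type*} (G : SimpleGraph V) (S : Set V) (v : V) : ℕ∞ :=
  ⨅ u ∈ S, G.edist u v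

/-- `N^i(S)`: the set of vertices (outside `S`) at distance exactly `i` from `S`. -/
noncomputable def distNbhd {V : Type*} (G : SimpleGraph V) (S : Set V) (i : ℕ) : Set V :=
  {v | v ∉ S ∧ eDistSet G S v = (i : ℕ∞)}

/-- `N^{≥ i}(S) = ⋃_{j ≥ i} N^j(S)`. -/
noncomputable def distNbhdGe {V : Type*} (G : SimpleGraph V) (S : Set V) (i : ℕ) : Set V :=
  ⋃ j ∈ {j : ℕ | i ≤ j}, distNbhd G S j

/-- Given the union `U = V_1 ∪ ⋯ ∪ V_{q-1}` and the last part `Vq`, the set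
`W_I = {v ∈ W : v complete to I, anticomplete to U \ I}`, where
`W = {v ∈ N(U ∪ Vq) : v anticomplete to Vq}`. -/
def Wpart {V : Type*} (G : SimpleGraph V) (U Vq I : Set V) : Set V :=
  {v ∈ nbhd G (U ∪ Vq) | AnticompleteTo G v Vq ∧ CompleteTo G v I ∧
    AnticompleteTo G v (U \ I)}

lemma tBroom_adj (t : ℕ) (a b : Fin (t+3)) : (tBroom t).Adj a b ↔ a ≠ b ∧
    ((a.val = 0 ∧ b.val = 1) ∨ (a.val = 1 ∧ b.val = 2) ∨ (a.val = 0 ∧ 3 ≤ b.val) ∨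
     (b.val = 0 ∧ a.val = 1) ∨ (b.val = 1 ∧ a.val = 2) ∨ (b.val = 0 ∧ 3 ≤ a.val)) := by
  have h0 : ((0 : Fin (t+3)) : ℕ) = 0 := rfl
  have h1 : ((1 : Fin (t+3)) : ℕ) = 1 := rfl
  have h2 : ((2 : Fin (t+3)) : ℕ) = 2 := rfl
  simp only [tBroom, fromRel_adj, Fin.ext_iff, h0, h1, h2]
  tauto

lemma broom_embed {V : Type} (G : SimpleGraph V) (t : ℕ) (z w w' : V) (vq : Fin t → V)
    (hinj : Function.Injective vq)
    (hzw : G.Adj z w) (hww' : G.Adj w w') (hzw' : ¬ G.Adj z w')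
    (hzq : ∀ i, G.Adj z (vq i))
    (hwq : ∀ i, ¬ G.Adj w (vq i))
    (hw'q : ∀ i, ¬ G.Adj w' (vq i))
    (hqq : ∀ i j, ¬ G.Adj (vq i) (vq j))
    (hzv : ∀ i, z ≠ vq i) (hwv : ∀ i, w ≠ vq i) (hw'v : ∀ i, w' ≠ vq i)
    (hzw'ne : z ≠ w') :
    Nonempty (tBroom t ↪g G) := by
  set f : Fin (t+3) → V := Fin.cons z (Fin.cons w (Fin.cons w' vq)) with hf
  have hzwne : z ≠ w := G.ne_of_adj hzw
  have hww'ne : w ≠ w' := G.ne_of_adj hww'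
  have hcases : ∀ a : Fin (t+3),
      (a.val = 0 ∧ f a = z) ∨ (a.val = 1 ∧ f a = w) ∨ (a.val = 2 ∧ f a = w') ∨
      (∃ i : Fin t, a.val = i.val + 3 ∧ f a = vq i) := by
    intro a
    induction a using Fin.cases with
    | zero => exact Or.inl ⟨rfl, rfl⟩
    | succ a => induction a using Fin.cases with
      | zero => exact Or.inr (Or.inl ⟨rfl, rfl⟩)
      | succ a => induction a using Fin.cases with
        | zero => exact Or.inr (Or.inr (Or.inl ⟨rfl, rfl⟩))
        | succ a => exact Or.inr (Or.inr (Or.inr ⟨a, by simp, rfl⟩))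
  have hrel : ∀ a b : Fin (t+3), G.Adj (f a) (f b) ↔ (tBroom t).Adj a b := by
    intro a b
    rcases hcases a with ⟨ha, hfa⟩ | ⟨ha, hfa⟩ | ⟨ha, hfa⟩ | ⟨i, ha, hfa⟩ <;>
      rcases hcases b with ⟨hb, hfb⟩ | ⟨hb, hfb⟩ | ⟨hb, hfb⟩ | ⟨j, hb, hfb⟩ <;>
      rw [tBroom_adj, ne_eq, Fin.ext_iff, hfa, hfb]
    · exact iff_of_false (G.irrefl) (by omega)
    · exact iff_of_true hzw (by omega)
    · exact iff_of_false hzw' (by omega)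
    · exact iff_of_true (hzq j) (by omega)
    · exact iff_of_true hzw.symm (by omega)
    · exact iff_of_false (G.irrefl) (by omega)
    · exact iff_of_true hww' (by omega)
    · exact iff_of_false (hwq j) (by omega)
    · exact iff_of_false (fun h => hzw' h.symm) (by omega)
    · exact iff_of_true hww'.symm (by omega)
    · exact iff_of_false (G.irrefl) (by omega)
    · exact iff_of_false (hw'q j) (by omega)
    · exact iff_of_true (hzq i).symm (by omega)
    · exact iff_of_false (fun h => (hwq i) h.symm) (by omega)
    · exact iff_of_false (fun h => (hw'q i) h.symm) (by omega)
    · exact iff_of_false (hqq i j) (by omega)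
  have hinjf : Function.Injective f := by
    intro a b h
    rcases hcases a with ⟨ha, hfa⟩ | ⟨ha, hfa⟩ | ⟨ha, hfa⟩ | ⟨i, ha, hfa⟩ <;>
      rcases hcases b with ⟨hb, hfb⟩ | ⟨hb, hfb⟩ | ⟨hb, hfb⟩ | ⟨j, hb, hfb⟩ <;>
      rw [hfa, hfb] at h
    · exact Fin.ext (by omega)
    · exact absurd h hzwne
    · exact absurd h hzw'ne
    · exact absurd h (hzv j)
    · exact absurd h.symm hzwne
    · exact Fin.ext (by omega)
    · exact absurd h hww'ne
    · exact absurd h (hwv j)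
    · exact absurd h.symm hzw'ne
    · exact absurd h.symm hww'ne
    · exact Fin.ext (by omega)
    · exact absurd h (hw'v j)
    · exact absurd h.symm (hzv i)
    · exact absurd h.symm (hwv i)
    · exact absurd h.symm (hw'v i)
    · have hij := congrArg Fin.val (hinj h); exact Fin.ext (by omega)
  exact ⟨⟨⟨f, hinjf⟩, fun {a b} => hrel a b⟩⟩

lemma crossing {α : Type*} (H : SimpleGraph α) (p : α → Prop) {a b : α}
    (hr : H.Reachable a b) (ha : p a) (hb : ¬ p b) :
    ∃ x y, H.Adj x y ∧ p x ∧ ¬ p y := by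
  obtain ⟨walk⟩ := hr
  induction walk with
  | nil => exact absurd ha hb
  | @cons u v r hadj rest ih =>
    by_cases hv : p v
    · exact ih hv hb
    · exact ⟨u, v, hadj, ha, hv⟩


/-- Lemma 2.2(ii). With `Q = G[V_1 ∪ ⋯ ∪ V_q]` complete `q`-partite,
`|V_q| = t`, `Z = {v ∈ N(V(Q)) : v complete to V_q}`, for every `z ∈ Z`,
every `I ⊆ V_1 ∪ ⋯ ∪ V_{q-1}` and every connected component `X_I` of `G[W_I]`,
`z` is complete or anticomplete to `V(X_I)`. -/
theorem Z_complete_or_anticomplete_component (t q : ℕ) (ht : 2 ≤ t) (hq : 2 ≤ q)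
    (V : Type) [Fintype V] (G : SimpleGraph V) (hfree : _root_.Free G (tBroom t))
    (Vs : Fin (q - 1) → Set V) (Vq : Set V)
    (hne : ∀ i, (Vs i).Nonempty) (hVq : Vq.ncard = t)
    (hdisj : ∀ i j, i ≠ j → Disjoint (Vs i) (Vs j))
    (hdisjq : ∀ i, Disjoint (Vs i) Vq)
    (hindep : ∀ i, ∀ u ∈ Vs i, ∀ w ∈ Vs i, ¬ G.Adj u w)
    (hindepq : ∀ u ∈ Vq, ∀ w ∈ Vq, ¬ G.Adj u w)
    (hcomp : ∀ i j, i ≠ j → ∀ u ∈ Vs i, ∀ w ∈ Vs j, G.Adj u w)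
    (hcompq : ∀ i, ∀ u ∈ Vs i, ∀ w ∈ Vq, G.Adj u w) :
    ∀ z ∈ {v ∈ nbhd G ((⋃ i, Vs i) ∪ Vq) | CompleteTo G v Vq},
      ∀ I : Set V, I ⊆ (⋃ i, Vs i) →
      ∀ C : (G.induce (Wpart G (⋃ i, Vs i) Vq I)).ConnectedComponent,
        CompleteTo G z (Subtype.val '' C.supp) ∨
        AnticompleteTo G z (Subtype.val '' C.supp) := by
  intro z hz I hI C
  obtain ⟨hznb, hzVq⟩ := hz
  by_contra hcon
  push_neg at hcon
  obtain ⟨hnc, hna⟩ := hcon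
  -- extract vertices a (adjacent) and b (non-adjacent)
  simp only [CompleteTo, AnticompleteTo, not_forall] at hnc hna
  obtain ⟨bv, hbv, hbna⟩ := hnc
  obtain ⟨av, hav, hava⟩ := hna
  push_neg at hava
  obtain ⟨a, haC, rfl⟩ := hav
  obtain ⟨b, hbC, rfl⟩ := hbv
  -- a, b are in the same component, hence reachable
  have hreach : (G.induce (Wpart G (⋃ i, Vs i) Vq I)).Reachable a b := by
    have h1 : (G.induce (Wpart G (⋃ i, Vs i) Vq I)).connectedComponentMk a = C :=
      haC
    have h2 : (G.induce (Wpart G (⋃ i, Vs i) Vq I)).connectedComponentMk b = C :=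
      hbC
    exact SimpleGraph.ConnectedComponent.exact (h1.trans h2.symm)
  obtain ⟨x, y, hxy, hx, hy⟩ := crossing _ (fun v => G.Adj z v.val) hreach hava hbna
  have hxyG : G.Adj (x : V) (y : V) := hxy
  -- properties of x and y as members of Wpart
  obtain ⟨hxnb, hxVq, _, _⟩ := x.2
  obtain ⟨hynb, hyVq, _, _⟩ := y.2
  -- enumerate Vq
  have hfin : Vq.Finite := Set.toFinite _
  have hcard : hfin.toFinset.card = t := by
    rw [← Set.ncard_eq_toFinset_card]; exact hVq
  let e := hfin.toFinset.equivFinOfCardEq hcard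
  set vq : Fin t → V := fun i => ((e.symm i : hfin.toFinset) : V) with hvq
  have hmem : ∀ i, vq i ∈ Vq := fun i => hfin.mem_toFinset.mp (e.symm i).2
  have hinj : Function.Injective vq := by
    intro i j h
    exact e.symm.injective (Subtype.ext h)
  have hzVq' : ∀ i, G.Adj z (vq i) := fun i => hzVq _ (hmem i)
  have hxVq' : ∀ i, ¬ G.Adj (x : V) (vq i) := fun i => hxVq _ (hmem i)
  have hyVq' : ∀ i, ¬ G.Adj (y : V) (vq i) := fun i => hyVq _ (hmem i)
  have hqq : ∀ i j, ¬ G.Adj (vq i) (vq j) := fun i j => hindepq _ (hmem i) _ (hmem j)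
  have hznotin : ∀ i, z ≠ vq i := by
    intro i h
    exact hznb.1 (Or.inr (h ▸ hmem i))
  have hxnotin : ∀ i, (x : V) ≠ vq i := by
    intro i h
    exact hxnb.1 (Or.inr (h ▸ hmem i))
  have hynotin : ∀ i, (y : V) ≠ vq i := by
    intro i h
    exact hynb.1 (Or.inr (h ▸ hmem i))
  have hzy : z ≠ (y : V) := by
    intro h
    have i0 : Fin t := ⟨0, by omega⟩
    exact hyVq' i0 (h ▸ hzVq' i0)
  exact hfree (broom_embed G t z x y vq hinj hx hxyG hy hzVq' hxVq' hyVq' hqq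
    hznotin hxnotin hynotin hzy)
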